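/- For integers n ≥ 2 and m ≥ 3, the F-index of the vertex S-join of the path P_n and the cycle C_m is F(P_n ∨̇_S C_m) = mn{(m² + n²) + 6(m + n)} − 6m² + 24mn − 10m + 16n − 22. -/

import Mathlib

/-- The subdivision graph `S(G)`: a new vertex is inserted into each edge of `G`
(each edge is replaced by a path of length 2). The inserted vertices form the
right summand `↥G.edgeSet`. -/
def Sgraph {V : Type*} (G : SimpleGraph V) : SimpleGraph (V ⊕ ↥G.edgeSet) where
  Adj x y :=
    match x, y with
    | Sum.inl v, Sum.inr e => v ∈ (e : Sym2 V)
    | Sum.inr e, Sum.inl v => v ∈ (e : Sym2 V)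
    | _, _ => False
  symm := ⟨by rintro (v | e) (w | f) h <;> exact h⟩
  loopless := ⟨by rintro (v | e) h <;> exact h⟩

/-- The graph `R(G)`: obtained from `G` by inserting a new vertex into each edge of `G`
and joining each new vertex to the end vertices of its corresponding edge. -/
def Rgraph {V : Type*} (G : SimpleGraph V) : SimpleGraph (V ⊕ ↥G.edgeSet) where
  Adj x y :=
    match x, y with
    | Sum.inl v, Sum.inl w => G.Adj v w
    | Sum.inl v, Sum.inr e => v ∈ (e : Sym2 V)
    | Sum.inr e, Sum.inl v => v ∈ (e : Sym2 V)
    | Sum.inr _, Sum.inr _ => False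
  symm := ⟨by
    rintro (v | e) (w | f) h
    · exact G.adj_symm h
    · exact h
    · exact h
    · exact h⟩
  loopless := ⟨by
    rintro (v | e) h
    · exact G.loopless.irrefl v h
    · exact h⟩

/-- The graph `Q(G)`: obtained from `G` by inserting a new vertex into each edge of `G`,
then joining by edges those pairs of new vertices lying on adjacent edges of `G`. -/
def Qgraph {V : Type*} (G : SimpleGraph V) : SimpleGraph (V ⊕ ↥G.edgeSet) where
  Adj x y :=
    match x, y with
    | Sum.inl _, Sum.inl _ => False
    | Sum.inl v, Sum.inr e => v ∈ (e : Sym2 V)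
    | Sum.inr e, Sum.inl v => v ∈ (e : Sym2 V)
    | Sum.inr e, Sum.inr f => e ≠ f ∧ ∃ v, v ∈ (e : Sym2 V) ∧ v ∈ (f : Sym2 V)
  symm := ⟨by
    rintro (v | e) (w | f) h
    · exact h
    · exact h
    · exact h
    · exact ⟨h.1.symm, by obtain ⟨v, h1, h2⟩ := h.2; exact ⟨v, h2, h1⟩⟩⟩
  loopless := ⟨by
    rintro (v | e) h
    · exact h
    · exact h.1 rfl⟩

/-- The total graph `T(G)`: obtained from `G` by inserting a new vertex into each edge,
joining each new vertex to the end vertices of its corresponding edge, and joining by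
edges those pairs of new vertices lying on adjacent edges of `G`. -/
def Tgraph {V : Type*} (G : SimpleGraph V) : SimpleGraph (V ⊕ ↥G.edgeSet) where
  Adj x y :=
    match x, y with
    | Sum.inl v, Sum.inl w => G.Adj v w
    | Sum.inl v, Sum.inr e => v ∈ (e : Sym2 V)
    | Sum.inr e, Sum.inl v => v ∈ (e : Sym2 V)
    | Sum.inr e, Sum.inr f => e ≠ f ∧ ∃ v, v ∈ (e : Sym2 V) ∧ v ∈ (f : Sym2 V)
  symm := ⟨by
    rintro (v | e) (w | f) h
    · exact G.adj_symm h
    · exact h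
    · exact h
    · exact ⟨h.1.symm, by obtain ⟨v, h1, h2⟩ := h.2; exact ⟨v, h2, h1⟩⟩⟩
  loopless := ⟨by
    rintro (v | e) h
    · exact G.loopless.irrefl v h
    · exact h.1 rfl⟩

/-- The disjoint union of `H` and `K` together with all edges joining a vertex `a` of `H`
with `P a` to every vertex of `K`. -/
def joinOn {A B : Type*} (H : SimpleGraph A) (K : SimpleGraph B) (P : A → Prop) :
    SimpleGraph (A ⊕ B) where
  Adj x y :=
    match x, y with
    | Sum.inl a, Sum.inl a' => H.Adj a a'
    | Sum.inr b, Sum.inr b' => K.Adj b b'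
    | Sum.inl a, Sum.inr _ => P a
    | Sum.inr _, Sum.inl a => P a
  symm := ⟨by
    rintro (a | b) (a' | b') h
    · exact H.adj_symm h
    · exact h
    · exact h
    · exact K.adj_symm h⟩
  loopless := ⟨by
    rintro (a | b) h
    · exact H.loopless.irrefl a h
    · exact K.loopless.irrefl b h⟩

/-- The vertex S-join `G₁ ∨̇_S G₂`: obtained from `S(G₁)` and `G₂` by joining each vertex
of `V(G₁)` to every vertex of `G₂`. -/
def vertexSJoin {V₁ V₂ : Type*} (G₁ : SimpleGraph V₁) (G₂ : SimpleGraph V₂) :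
    SimpleGraph ((V₁ ⊕ ↥G₁.edgeSet) ⊕ V₂) :=
  joinOn (Sgraph G₁) G₂ (fun x => x.isLeft)

/-- The edge S-join `G₁ ∨̱_S G₂`: obtained from `S(G₁)` and `G₂` by joining each inserted
vertex (each vertex of `I(G₁)`) to every vertex of `G₂`. -/
def edgeSJoin {V₁ V₂ : Type*} (G₁ : SimpleGraph V₁) (G₂ : SimpleGraph V₂) :
    SimpleGraph ((V₁ ⊕ ↥G₁.edgeSet) ⊕ V₂) :=
  joinOn (Sgraph G₁) G₂ (fun x => x.isRight)

/-- The vertex R-join `G₁ ∨̇_R G₂`. -/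
def vertexRJoin {V₁ V₂ : Type*} (G₁ : SimpleGraph V₁) (G₂ : SimpleGraph V₂) :
    SimpleGraph ((V₁ ⊕ ↥G₁.edgeSet) ⊕ V₂) :=
  joinOn (Rgraph G₁) G₂ (fun x => x.isLeft)

/-- The edge R-join `G₁ ∨̱_R G₂`. -/
def edgeRJoin {V₁ V₂ : Type*} (G₁ : SimpleGraph V₁) (G₂ : SimpleGraph V₂) :
    SimpleGraph ((V₁ ⊕ ↥G₁.edgeSet) ⊕ V₂) :=
  joinOn (Rgraph G₁) G₂ (fun x => x.isRight)

/-- The vertex Q-join `G₁ ∨̇_Q G₂`. -/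
def vertexQJoin {V₁ V₂ : Type*} (G₁ : SimpleGraph V₁) (G₂ : SimpleGraph V₂) :
    SimpleGraph ((V₁ ⊕ ↥G₁.edgeSet) ⊕ V₂) :=
  joinOn (Qgraph G₁) G₂ (fun x => x.isLeft)

/-- The edge Q-join `G₁ ∨̱_Q G₂`. -/
def edgeQJoin {V₁ V₂ : Type*} (G₁ : SimpleGraph V₁) (G₂ : SimpleGraph V₂) :
    SimpleGraph ((V₁ ⊕ ↥G₁.edgeSet) ⊕ V₂) :=
  joinOn (Qgraph G₁) G₂ (fun x => x.isRight)

/-- The vertex T-join `G₁ ∨̇_T G₂`. -/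
def vertexTJoin {V₁ V₂ : Type*} (G₁ : SimpleGraph V₁) (G₂ : SimpleGraph V₂) :
    SimpleGraph ((V₁ ⊕ ↥G₁.edgeSet) ⊕ V₂) :=
  joinOn (Tgraph G₁) G₂ (fun x => x.isLeft)

/-- The edge T-join `G₁ ∨̱_T G₂`. -/
def edgeTJoin {V₁ V₂ : Type*} (G₁ : SimpleGraph V₁) (G₂ : SimpleGraph V₂) :
    SimpleGraph ((V₁ ⊕ ↥G₁.edgeSet) ⊕ V₂) :=
  joinOn (Tgraph G₁) G₂ (fun x => x.isRight)

/-- Degree of a vertex in a graph on a finite vertex type. -/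
noncomputable def gdeg {V : Type*} [Finite V] (G : SimpleGraph V) (v : V) : ℕ :=
  haveI : Fintype ↥(G.neighborSet v) := Fintype.ofFinite _
  G.degree v

/-- The forgotten topological index (F-index): `F(G) = ∑_{v ∈ V(G)} d_G(v)³`. -/
noncomputable def Findex {V : Type*} [Finite V] (G : SimpleGraph V) : ℕ :=
  haveI := Fintype.ofFinite V
  ∑ v : V, gdeg G v ^ 3

/-- The first Zagreb index: `M₁(G) = ∑_{v ∈ V(G)} d_G(v)²`. -/
noncomputable def M1 {V : Type*} [Finite V] (G : SimpleGraph V) : ℕ :=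
  haveI := Fintype.ofFinite V
  ∑ v : V, gdeg G v ^ 2

/-- `M₄(G) = ∑_{v ∈ V(G)} d_G(v)⁴`. -/
noncomputable def M4 {V : Type*} [Finite V] (G : SimpleGraph V) : ℕ :=
  haveI := Fintype.ofFinite V
  ∑ v : V, gdeg G v ^ 4

/-- The hyper Zagreb index: `HM(G) = ∑_{uv ∈ E(G)} (d_G(u) + d_G(v))²`. -/
noncomputable def HM {V : Type*} [Finite V] (G : SimpleGraph V) : ℕ :=
  haveI : Fintype ↥G.edgeSet := Fintype.ofFinite _
  ∑ e : ↥G.edgeSet,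
    Sym2.lift ⟨fun u v => (gdeg G u + gdeg G v) ^ 2,
      fun u v => by dsimp only; rw [add_comm]⟩ (e : Sym2 V)

/-- The redefined Zagreb index:
`ReZM(G) = ∑_{uv ∈ E(G)} d_G(u) d_G(v) (d_G(u) + d_G(v))`. -/
noncomputable def ReZM {V : Type*} [Finite V] (G : SimpleGraph V) : ℕ :=
  haveI : Fintype ↥G.edgeSet := Fintype.ofFinite _
  ∑ e : ↥G.edgeSet,
    Sym2.lift ⟨fun u v => gdeg G u * gdeg G v * (gdeg G u + gdeg G v),
      fun u v => by dsimp only; ring⟩ (e : Sym2 V)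

/-- The number of edges of `G`. -/
noncomputable def numEdges {V : Type*} (G : SimpleGraph V) : ℕ :=
  Nat.card ↥G.edgeSet


section Aux

lemma gdeg_eq_natCard {V : Type*} [Finite V] (G : SimpleGraph V) (v : V) :
    gdeg G v = Nat.card {w // G.Adj v w} := by
  unfold gdeg
  letI : Fintype ↥(G.neighborSet v) := Fintype.ofFinite _
  rw [Nat.card_congr (Equiv.subtypeEquivRight (fun w => Iff.rfl) :
      {w // G.Adj v w} ≃ ↥(G.neighborSet v)), Nat.card_eq_fintype_card,
    SimpleGraph.card_neighborSet_eq_degree]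

lemma gdeg_eq_degree {V : Type*} [Fintype V] (G : SimpleGraph V) (v : V)
    [Fintype ↥(G.neighborSet v)] : gdeg G v = G.degree v := by
  rw [gdeg_eq_natCard, ← SimpleGraph.card_neighborSet_eq_degree, ← Nat.card_eq_fintype_card]
  exact Nat.card_congr (Equiv.subtypeEquivRight (fun w => Iff.rfl))

lemma natCard_subtype_sum {A B : Type*} [Finite A] [Finite B] (p : A ⊕ B → Prop) :
    Nat.card {y : A ⊕ B // p y}
      = Nat.card {a // p (Sum.inl a)} + Nat.card {b // p (Sum.inr b)} := by
  rw [← Nat.card_sum]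
  exact Nat.card_congr
    { toFun := fun x => match x with
        | ⟨.inl a, h⟩ => .inl ⟨a, h⟩
        | ⟨.inr b, h⟩ => .inr ⟨b, h⟩
      invFun := fun x => match x with
        | .inl ⟨a, h⟩ => ⟨.inl a, h⟩
        | .inr ⟨b, h⟩ => ⟨.inr b, h⟩
      left_inv := by rintro ⟨(a | b), h⟩ <;> rfl
      right_inv := by rintro (⟨a, h⟩ | ⟨b, h⟩) <;> rfl }

variable {V₁ V₂ : Type*} [Finite V₁] [Finite V₂] (G₁ : SimpleGraph V₁) (G₂ : SimpleGraph V₂)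

lemma incCard (v : V₁) :
    Nat.card {e : ↥G₁.edgeSet // v ∈ (e : Sym2 V₁)} = gdeg G₁ v := by
  classical
  rw [gdeg_eq_natCard]
  refine Nat.card_congr ?_
  refine Equiv.trans ?_ ((G₁.incidenceSetEquivNeighborSet v).trans
    (Equiv.subtypeEquivRight (fun w => Iff.rfl)))
  exact
    { toFun := fun x => ⟨x.1.1, x.1.2, x.2⟩
      invFun := fun x => ⟨⟨x.1, x.2.1⟩, x.2.2⟩
      left_inv := by rintro ⟨⟨e, he⟩, hv⟩; rfl
      right_inv := by rintro ⟨e, he, hv⟩; rfl }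

set_option linter.unusedSectionVars false in
lemma pairCard (e : ↥G₁.edgeSet) : Nat.card {w : V₁ // w ∈ (e : Sym2 V₁)} = 2 := by
  obtain ⟨e, he⟩ := e
  induction e with
  | _ a b =>
    have hab : a ≠ b := (G₁.mem_edgeSet.mp he).ne
    have h2 : {w : V₁ | w ∈ (s(a, b) : Sym2 V₁)} = {a, b} := by
      ext w; simp [Sym2.mem_iff]
    show Nat.card ↥{w : V₁ | w ∈ (s(a, b) : Sym2 V₁)} = 2
    rw [Nat.card_coe_set_eq, h2, Set.ncard_pair hab]

lemma deg_vSJoin_vert (v : V₁) :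
    gdeg (vertexSJoin G₁ G₂) (Sum.inl (Sum.inl v)) = gdeg G₁ v + Nat.card V₂ := by
  rw [gdeg_eq_natCard]
  rw [natCard_subtype_sum, natCard_subtype_sum]
  have h1 : Nat.card {a : V₁ // (vertexSJoin G₁ G₂).Adj (Sum.inl (Sum.inl v))
      (Sum.inl (Sum.inl a))} = 0 := by
    haveI : IsEmpty {a : V₁ // (vertexSJoin G₁ G₂).Adj (Sum.inl (Sum.inl v))
        (Sum.inl (Sum.inl a))} := ⟨fun x => x.2⟩
    exact Nat.card_of_isEmpty
  have h2 : Nat.card {e : ↥G₁.edgeSet // (vertexSJoin G₁ G₂).Adj (Sum.inl (Sum.inl v))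
      (Sum.inl (Sum.inr e))} = gdeg G₁ v := by
    rw [← incCard G₁ v]
    exact Nat.card_congr (Equiv.subtypeEquivRight (fun e => Iff.rfl))
  have h3 : Nat.card {b : V₂ // (vertexSJoin G₁ G₂).Adj (Sum.inl (Sum.inl v))
      (Sum.inr b)} = Nat.card V₂ := by
    refine Nat.card_congr (Equiv.subtypeUnivEquiv fun b => ?_)
    show (Sum.inl v : V₁ ⊕ ↥G₁.edgeSet).isLeft
    rfl
  rw [h1, h2, h3]; omega

lemma deg_vSJoin_edge (e : ↥G₁.edgeSet) :
    gdeg (vertexSJoin G₁ G₂) (Sum.inl (Sum.inr e)) = 2 := by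
  rw [gdeg_eq_natCard, natCard_subtype_sum, natCard_subtype_sum]
  have h1 : Nat.card {a : V₁ // (vertexSJoin G₁ G₂).Adj (Sum.inl (Sum.inr e))
      (Sum.inl (Sum.inl a))} = 2 := by
    rw [← pairCard G₁ e]
    exact Nat.card_congr (Equiv.subtypeEquivRight (fun w => Iff.rfl))
  have h2 : Nat.card {f : ↥G₁.edgeSet // (vertexSJoin G₁ G₂).Adj (Sum.inl (Sum.inr e))
      (Sum.inl (Sum.inr f))} = 0 := by
    haveI : IsEmpty {f : ↥G₁.edgeSet // (vertexSJoin G₁ G₂).Adj (Sum.inl (Sum.inr e))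
        (Sum.inl (Sum.inr f))} := ⟨fun x => x.2⟩
    exact Nat.card_of_isEmpty
  have h3 : Nat.card {b : V₂ // (vertexSJoin G₁ G₂).Adj (Sum.inl (Sum.inr e))
      (Sum.inr b)} = 0 := by
    haveI : IsEmpty {b : V₂ // (vertexSJoin G₁ G₂).Adj (Sum.inl (Sum.inr e))
        (Sum.inr b)} := ⟨fun x => by simpa [vertexSJoin, joinOn] using x.2⟩
    exact Nat.card_of_isEmpty
  rw [h1, h2, h3]



lemma deg_vSJoin_right (w : V₂) :
    gdeg (vertexSJoin G₁ G₂) (Sum.inr w) = Nat.card V₁ + gdeg G₂ w := by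
  rw [gdeg_eq_natCard, natCard_subtype_sum (A := V₁ ⊕ ↥G₁.edgeSet)]
  have h1 : Nat.card {a : V₁ ⊕ ↥G₁.edgeSet // (vertexSJoin G₁ G₂).Adj (Sum.inr w)
      (Sum.inl a)} = Nat.card V₁ := by
    rw [natCard_subtype_sum (A := V₁)]
    have ha : Nat.card {a : V₁ // (vertexSJoin G₁ G₂).Adj (Sum.inr w)
        (Sum.inl (Sum.inl a))} = Nat.card V₁ := by
      refine Nat.card_congr (Equiv.subtypeUnivEquiv fun a => ?_)
      show (Sum.inl a : V₁ ⊕ ↥G₁.edgeSet).isLeft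
      rfl
    have hb : Nat.card {e : ↥G₁.edgeSet // (vertexSJoin G₁ G₂).Adj (Sum.inr w)
        (Sum.inl (Sum.inr e))} = 0 := by
      haveI : IsEmpty {e : ↥G₁.edgeSet // (vertexSJoin G₁ G₂).Adj (Sum.inr w)
          (Sum.inl (Sum.inr e))} := ⟨fun x => by simpa [vertexSJoin, joinOn] using x.2⟩
      exact Nat.card_of_isEmpty
    rw [ha, hb]
    omega
  have h2 : Nat.card {b : V₂ // (vertexSJoin G₁ G₂).Adj (Sum.inr w)
      (Sum.inr b)} = gdeg G₂ w := by
    rw [gdeg_eq_natCard]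
    exact Nat.card_congr (Equiv.subtypeEquivRight (fun b => Iff.rfl))
  rw [h1, h2]

lemma Findex_eq_sum {V : Type*} [Fintype V] (G : SimpleGraph V) :
    Findex G = ∑ v, gdeg G v ^ 3 := by
  unfold Findex
  rw [Subsingleton.elim (Fintype.ofFinite V) ‹Fintype V›]

lemma path_deg {n : ℕ} (hn : 2 ≤ n) (v : Fin n) :
    gdeg (SimpleGraph.pathGraph n) v = if v.val = 0 ∨ v.val = n - 1 then 1 else 2 := by
  rw [gdeg_eq_natCard]
  have hmem : ∀ w : Fin n, (SimpleGraph.pathGraph n).Adj v w ↔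
      (v.val + 1 = w.val ∨ w.val + 1 = v.val) := by
    intro w
    rw [SimpleGraph.pathGraph_adj]
  split
  next h =>
    rcases h with h0 | h1
    · have hset : {w : Fin n | (SimpleGraph.pathGraph n).Adj v w}
          = {(⟨1, by omega⟩ : Fin n)} := by
        ext w
        simp only [Set.mem_setOf_eq, Set.mem_singleton_iff, hmem, Fin.ext_iff]
        omega
      show Nat.card ↥{w : Fin n | (SimpleGraph.pathGraph n).Adj v w} = 1
      rw [Nat.card_coe_set_eq, hset, Set.ncard_singleton]
    · have hset : {w : Fin n | (SimpleGraph.pathGraph n).Adj v w}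
          = {(⟨n - 2, by omega⟩ : Fin n)} := by
        ext w
        simp only [Set.mem_setOf_eq, Set.mem_singleton_iff, hmem, Fin.ext_iff]
        omega
      show Nat.card ↥{w : Fin n | (SimpleGraph.pathGraph n).Adj v w} = 1
      rw [Nat.card_coe_set_eq, hset, Set.ncard_singleton]
  next h =>
    push_neg at h
    have hset : {w : Fin n | (SimpleGraph.pathGraph n).Adj v w}
        = {(⟨v.val - 1, by omega⟩ : Fin n), (⟨v.val + 1, by omega⟩ : Fin n)} := by
      ext w
      simp only [Set.mem_setOf_eq, Set.mem_insert_iff, Set.mem_singleton_iff, hmem, Fin.ext_iff]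
      omega
    show Nat.card ↥{w : Fin n | (SimpleGraph.pathGraph n).Adj v w} = 2
    rw [Nat.card_coe_set_eq, hset, Set.ncard_pair (by simp [Fin.ext_iff])]

lemma path_sum {n : ℕ} (hn : 2 ≤ n) (f : ℕ → ℕ) :
    ∑ v : Fin n, f (gdeg (SimpleGraph.pathGraph n) v)
      = 2 * f 1 + (n - 2) * f 2 := by
  classical
  have h01 : (⟨0, by omega⟩ : Fin n) ≠ ⟨n - 1, by omega⟩ := by
    simp [Fin.ext_iff]; omega
  set s : Finset (Fin n) := {(⟨0, by omega⟩ : Fin n), ⟨n - 1, by omega⟩} with hs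
  have hsub : s ⊆ Finset.univ := Finset.subset_univ _
  rw [← Finset.sum_sdiff hsub]
  have h1 : ∑ v ∈ s, f (gdeg (SimpleGraph.pathGraph n) v) = 2 * f 1 := by
    rw [Finset.sum_pair h01]
    rw [path_deg hn, path_deg hn]
    simp
    ring
  have h2 : ∑ v ∈ Finset.univ \ s, f (gdeg (SimpleGraph.pathGraph n) v)
      = (n - 2) * f 2 := by
    rw [Finset.sum_congr rfl (fun v hv => ?_), Finset.sum_const, smul_eq_mul]
    · congr 1
      rw [Finset.card_sdiff_of_subset hsub, Finset.card_univ, Fintype.card_fin,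
        Finset.card_pair h01]
    · rw [path_deg hn]
      have hv' : v.val ≠ 0 ∧ v.val ≠ n - 1 := by
        simp only [Finset.mem_sdiff, Finset.mem_insert, Finset.mem_singleton, hs,
          Fin.ext_iff] at hv
        omega
      rw [if_neg (by omega)]
  rw [h1, h2]; ring

lemma path_edge_card {n : ℕ} (hn : 2 ≤ n) :
    Nat.card ↥(SimpleGraph.pathGraph n).edgeSet = n - 1 := by
  classical
  letI : Fintype ↥(SimpleGraph.pathGraph n).edgeSet := Fintype.ofFinite _
  letI : DecidableRel (SimpleGraph.pathGraph n).Adj := Classical.decRel _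
  have hh := SimpleGraph.sum_degrees_eq_twice_card_edges (SimpleGraph.pathGraph n)
  have hd : ∀ v : Fin n, (SimpleGraph.pathGraph n).degree v
      = gdeg (SimpleGraph.pathGraph n) v := fun v => (gdeg_eq_degree _ _).symm
  rw [Finset.sum_congr rfl (fun v _ => hd v)] at hh
  have hsum : ∑ v : Fin n, gdeg (SimpleGraph.pathGraph n) v = 2 * 1 + (n - 2) * 2 :=
    path_sum hn (fun d => d)
  rw [hsum] at hh
  have hc : ∀ inst : Fintype ↥(SimpleGraph.pathGraph n).edgeSet,
      (@SimpleGraph.edgeFinset _ (SimpleGraph.pathGraph n) inst).card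
        = Nat.card ↥(SimpleGraph.pathGraph n).edgeSet := fun inst =>
    (Set.toFinset_card _).trans (@Nat.card_eq_fintype_card _ inst).symm
  rw [hc] at hh
  omega

lemma cycle_deg {m : ℕ} (hm : 3 ≤ m) (w : Fin m) :
    gdeg (SimpleGraph.cycleGraph m) w = 2 := by
  obtain ⟨k, rfl⟩ : ∃ k, m = k + 3 := ⟨m - 3, by omega⟩
  rw [gdeg_eq_degree, SimpleGraph.cycleGraph_degree_three_le]

end Aux

theorem Findex_vertexSJoin_ex9 (n m : ℕ) (hn : 2 ≤ n) (hm : 3 ≤ m) :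
    (Findex (vertexSJoin (SimpleGraph.pathGraph n) (SimpleGraph.cycleGraph m)) : ℤ) =
      (m : ℤ) * (n : ℤ) * (((m : ℤ) ^ 2 + (n : ℤ) ^ 2) + 6 * ((m : ℤ) + (n : ℤ))) - 6 * (m : ℤ) ^ 2 + 24 * (m : ℤ) * (n : ℤ) - 10 * (m : ℤ) + 16 * (n : ℤ) - 22 := by
  classical
  set P := SimpleGraph.pathGraph n with hP
  set C := SimpleGraph.cycleGraph m with hC
  letI : Fintype ↥P.edgeSet := Fintype.ofFinite _
  rw [Findex_eq_sum, Fintype.sum_sum_type, Fintype.sum_sum_type]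
  have hcardm : Nat.card (Fin m) = m := by simp
  have hcardn : Nat.card (Fin n) = n := by simp
  have h1 : ∑ v : Fin n, gdeg (vertexSJoin P C) (Sum.inl (Sum.inl v)) ^ 3
      = 2 * (1 + m) ^ 3 + (n - 2) * (2 + m) ^ 3 := by
    rw [Finset.sum_congr rfl (fun v _ => by rw [deg_vSJoin_vert, hcardm])]
    exact path_sum hn (fun d => (d + m) ^ 3)
  have h2 : ∑ e : ↥P.edgeSet, gdeg (vertexSJoin P C) (Sum.inl (Sum.inr e)) ^ 3
      = (n - 1) * 8 := by
    rw [Finset.sum_congr rfl (fun e _ => by rw [deg_vSJoin_edge]), Finset.sum_const,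
      smul_eq_mul, Finset.card_univ, ← Nat.card_eq_fintype_card, path_edge_card hn]
    norm_num
  have h3 : ∑ w : Fin m, gdeg (vertexSJoin P C) (Sum.inr w) ^ 3
      = m * (n + 2) ^ 3 := by
    rw [Finset.sum_congr rfl (fun w _ => by
      rw [deg_vSJoin_right, hcardn, hC, cycle_deg hm]), Finset.sum_const, smul_eq_mul,
      Finset.card_univ, Fintype.card_fin]
  rw [h1, h2, h3]
  obtain ⟨k, rfl⟩ : ∃ k, n = k + 2 := ⟨n - 2, by omega⟩
  have e1 : k + 2 - 2 = k := by omega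
  have e2 : k + 2 - 1 = k + 1 := by omega
  rw [e1, e2]
  push_cast
  ring
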